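/- Let G be a countable group acting on a compact metrizable space X with ergodic invariant Borel probability measure μ, and let (Y, ν) be a measure-preserving Borel G-space. For Borel sets A ⊂ X and C ⊂ Y, the function x ↦ ν(A_x⁻¹C) is μ-almost everywhere equal to the constant (μ ⊗ ν)(G·(A × C)), where G acts diagonally on X × Y. -/
import Mathlib


open MeasureTheory
open scoped Pointwise

/-- An invariant measurable `ℝ≥0∞`-valued function on an ergodic system is a.e. constant. -/
lemma ae_eq_const_of_invariant' {G X : Type*} [Group G] [MeasurableSpace X]
    [MulAction G X] (μ : Measure X) [IsProbabilityMeasure μ]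
    (hμerg : ∀ s : Set X, MeasurableSet s →
      (∀ g : G, (fun x : X => g • x) ⁻¹' s = s) → μ s = 0 ∨ μ s = 1)
    (f : X → ENNReal) (hf : Measurable f) (hinv : ∀ (g : G) (x : X), f (g • x) = f x) :
    ∃ c, ∀ᵐ x ∂μ, f x = c := by
  set S : ENNReal → Set X := fun t => {x | f x ≤ t} with hS
  have hSmeas : ∀ t, MeasurableSet (S t) := fun t => hf measurableSet_Iic
  have hSdich : ∀ t, μ (S t) = 0 ∨ μ (S t) = 1 := by
    intro t
    refine hμerg (S t) (hSmeas t) ?_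
    intro g
    ext x
    simp [hS, hinv g x]
  set T : Set ENNReal := {t | μ (S t) = 1} with hT
  have htop : (⊤ : ENNReal) ∈ T := by
    have : S ⊤ = Set.univ := by ext x; simp [hS]
    simp [hT, this]
  set c : ENNReal := sInf T with hc
  -- a.e. f x ≤ c
  have h1 : μ (S c) = 1 := by
    obtain ⟨u, hu_anti, hu_tendsto, hu_mem⟩ :=
      exists_seq_tendsto_sInf ⟨⊤, htop⟩ (OrderBot.bddBelow T)
    have hiInf : ⨅ n, u n = c := by
      exact tendsto_nhds_unique (tendsto_atTop_iInf hu_anti) hu_tendsto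
    have hset : S c = ⋂ n, S (u n) := by
      ext x
      simp only [hS, Set.mem_setOf_eq, Set.mem_iInter, ← hiInf, le_iInf_iff]
    rw [hset, ← prob_compl_eq_zero_iff (MeasurableSet.iInter fun n => hSmeas (u n))]
    rw [Set.compl_iInter]
    refine measure_iUnion_null fun n => ?_
    rw [prob_compl_eq_zero_iff (hSmeas (u n))]
    exact hu_mem n
  have hle : ∀ᵐ x ∂μ, f x ≤ c := by
    have h0 := (prob_compl_eq_zero_iff (μ := μ) (hSmeas c)).mpr h1
    rw [ae_iff]
    refine measure_mono_null ?_ h0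
    intro a ha
    simpa [hS] using ha
  -- a.e. c ≤ f x
  have hge : ∀ᵐ x ∂μ, c ≤ f x := by
    rw [ae_iff]
    have hsub : {x | ¬ c ≤ f x} ⊆
        ⋃ q : ℚ, {x | f x ≤ (Real.toNNReal q : ENNReal) ∧ (Real.toNNReal q : ENNReal) < c} := by
      intro x hx
      simp only [Set.mem_setOf_eq, not_le] at hx
      obtain ⟨q, _, hq1, hq2⟩ := ENNReal.lt_iff_exists_rat_btwn.mp hx
      exact Set.mem_iUnion.2 ⟨q, hq1.le, hq2⟩
    refine measure_mono_null hsub (measure_iUnion_null fun q => ?_)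
    by_cases hq : (Real.toNNReal q : ENNReal) < c
    · have hnot : (Real.toNNReal q : ENNReal) ∉ T := fun h => absurd (csInf_le (OrderBot.bddBelow T) h) (not_le.2 hq)
      have h0 : μ (S (Real.toNNReal q : ENNReal)) = 0 := (hSdich _).resolve_right hnot
      refine measure_mono_null ?_ h0
      intro x hx
      exact hx.1
    · have : {x | f x ≤ (Real.toNNReal q : ENNReal) ∧ (Real.toNNReal q : ENNReal) < c} = ∅ := by
        ext x; simp [hq]
      simp [this]
  exact ⟨c, by filter_upwards [hle, hge] with x h1 h2 using le_antisymm h1 h2⟩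

theorem nu_actionSet_ae_const {G X Y : Type*} [Group G] [Countable G]
    [TopologicalSpace X] [CompactSpace X] [TopologicalSpace.MetrizableSpace X]
    [MeasurableSpace X] [BorelSpace X] [MulAction G X]
    (hcont : ∀ g : G, Continuous fun x : X => g • x)
    (μ : Measure X) [IsProbabilityMeasure μ]
    (hμinv : ∀ g : G, Measure.map (fun x : X => g • x) μ = μ)
    (hμerg : ∀ s : Set X, MeasurableSet s →
      (∀ g : G, (fun x : X => g • x) ⁻¹' s = s) → μ s = 0 ∨ μ s = 1)
    [MeasurableSpace Y] [MulAction G Y]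
    (hmeasY : ∀ g : G, Measurable fun y : Y => g • y)
    (ν : Measure Y) [IsProbabilityMeasure ν]
    (hν : ∀ g : G, Measure.map (fun y : Y => g • y) ν = ν)
    (A : Set X) (hA : MeasurableSet A) (C : Set Y) (hC : MeasurableSet C) :
    ∀ᵐ x ∂μ, ν (⋃ g ∈ {g : G | g • x ∈ A}, g⁻¹ • C) =
      (μ.prod ν) (⋃ g : G, (fun p : X × Y => (g • p.1, g • p.2)) '' (A ×ˢ C)) := by
  -- the union as a preimage set
  set F : Set (X × Y) := ⋃ g : G, (fun p : X × Y => (g • p.1, g • p.2)) ⁻¹' (A ×ˢ C) with hF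
  have hFmeas : MeasurableSet F := by
    refine MeasurableSet.iUnion fun g => (hA.prod hC).preimage ?_
    exact ((hcont g).measurable.comp measurable_fst).prodMk ((hmeasY g).comp measurable_snd)
  have hFE : F = ⋃ g : G, (fun p : X × Y => (g • p.1, g • p.2)) '' (A ×ˢ C) := by
    ext p
    simp only [hF, Set.mem_iUnion, Set.mem_preimage, Set.mem_image, Set.mem_prod]
    constructor
    · rintro ⟨g, hx, hy⟩
      exact ⟨g⁻¹, ⟨g • p.1, g • p.2⟩, ⟨hx, hy⟩, by simp⟩
    · rintro ⟨g, q, hq, rfl⟩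
      exact ⟨g⁻¹, by simpa using hq.1, by simpa using hq.2⟩
  -- section identity
  have hsec : ∀ x : X, (⋃ g ∈ {g : G | g • x ∈ A}, g⁻¹ • C) = Prod.mk x ⁻¹' F := by
    intro x
    ext y
    simp only [Set.mem_iUnion, Set.mem_setOf_eq, Set.mem_preimage, hF, Set.mem_prod,
      Set.mem_smul_set_iff_inv_smul_mem, inv_inv]
    tauto
  set f : X → ENNReal := fun x => ν (Prod.mk x ⁻¹' F) with hf
  have hfmeas : Measurable f := measurable_measure_prodMk_left hFmeas
  have hsecmeas : ∀ x : X, MeasurableSet (Prod.mk x ⁻¹' F) :=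
    fun x => hFmeas.preimage measurable_prodMk_left
  have hfinv : ∀ (g : G) (x : X), f (g • x) = f x := by
    intro g x
    have hkey : Prod.mk (g • x) ⁻¹' F = (fun y : Y => g⁻¹ • y) ⁻¹' (Prod.mk x ⁻¹' F) := by
      ext y
      simp only [Set.mem_preimage, hF, Set.mem_iUnion, Set.mem_prod]
      constructor
      · rintro ⟨h, hx, hy⟩
        exact ⟨h * g, by simpa [mul_smul] using hx, by simpa [mul_smul] using hy⟩
      · rintro ⟨h, hx, hy⟩
        exact ⟨h * g⁻¹, by simpa [mul_smul] using hx, by simpa [mul_smul] using hy⟩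
    rw [hf]
    simp only [hkey]
    rw [← Measure.map_apply (hmeasY g⁻¹) (hsecmeas x), hν g⁻¹]
  obtain ⟨c, hcae⟩ := ae_eq_const_of_invariant' μ hμerg f hfmeas hfinv
  have hconst : c = (μ.prod ν) F := by
    have h1 : (μ.prod ν) F = ∫⁻ x, f x ∂μ := (Measure.prod_apply hFmeas)
    rw [h1, lintegral_congr_ae hcae, lintegral_const, measure_univ, mul_one]
  filter_upwards [hcae] with x hx
  rw [hconst, hFE] at hx
  exact (congrArg ν (hsec x)).trans hx
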